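/- (Model-based performance bound) Suppose D_TV[p_0, p̃_0] = δ_0 and for t ≥ 1 the per-step model error satisfies E_{(s,a)∼p̃_{t-1}^π}[D_TV[p(·|s,a), p̃(·|s,a)]] ≤ δ_t, where p_t^π and p̃_t^π are the step-t state-action distributions under policy π in dynamics p and p̃ respectively (evolving by the Markov kernels induced by the dynamics and the same policy π). If |r(s,a)| ≤ r_max, then for the discounted returns J(π) = Σ_{t=0}^∞ γ^t E_{p_t^π}[r] and J̃(π) = Σ_{t=0}^∞ γ^t E_{p̃_t^π}[r], we have J(π) ≥ J̃(π) - (2 r_max / (1-γ)) Σ_{t=0}^∞ γ^t δ_t, provided the series Σ γ^t δ_t converges. -/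

import Mathlib

/-- Total-variation distance between two pmfs on a finite type. -/
noncomputable def tv {X : Type*} [Fintype X] (f g : X → ℝ) : ℝ :=
  (1 / 2) * ∑ x, |f x - g x|

/-- The state-action distribution at step `t` under dynamics `P` (kernel from
state-action pairs to states), policy `π`, and initial state distribution `p0`. -/
noncomputable def saDist {S A : Type*} [Fintype S] [Fintype A]
    (P : S × A → S → ℝ) (π : S → A → ℝ) (p0 : S → ℝ) : ℕ → S × A → ℝ
  | 0 => fun sa => p0 sa.1 * π sa.1 sa.2
  | t + 1 => fun sa => (∑ sa', P sa' sa.1 * saDist P π p0 t sa') * π sa.1 sa.2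

/-- Model-based performance bound: the true return is at least the model return
minus `(2 r_max/(1-γ)) Σ_t γ^t δ_t`, where `δ_t` bounds the expected one-step
model error along the model rollout distribution. -/
theorem stmt_8 {S A : Type*} [Fintype S] [Fintype A]
    (P Pm : S × A → S → ℝ) (π : S → A → ℝ) (p0 : S → ℝ)
    (hP0 : ∀ sa s', 0 ≤ P sa s') (hPm0 : ∀ sa s', 0 ≤ Pm sa s')
    (hP1 : ∀ sa, ∑ s', P sa s' = 1) (hPm1 : ∀ sa, ∑ s', Pm sa s' = 1)
    (hπ0 : ∀ s a, 0 ≤ π s a) (hπ1 : ∀ s, ∑ a, π s a = 1)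
    (hp00 : ∀ s, 0 ≤ p0 s) (hp01 : ∑ s, p0 s = 1)
    (r : S × A → ℝ) (rmax : ℝ) (hr : ∀ sa, |r sa| ≤ rmax)
    (γ : ℝ) (hγ : γ ∈ Set.Ioo (0 : ℝ) 1)
    (δ : ℕ → ℝ) (hδ : ∀ t, 0 ≤ δ t) (hδ0 : δ 0 = 0)
    (hmodel : ∀ t : ℕ, 1 ≤ t →
      ∑ sa, saDist Pm π p0 (t - 1) sa * tv (P sa) (Pm sa) ≤ δ t)
    (hsum : Summable fun t : ℕ => γ ^ t * δ t) :
    (∑' t : ℕ, γ ^ t * ∑ sa, r sa * saDist P π p0 t sa)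
      ≥ (∑' t : ℕ, γ ^ t * ∑ sa, r sa * saDist Pm π p0 t sa)
        - (2 * rmax / (1 - γ)) * ∑' t : ℕ, γ ^ t * δ t := by
  obtain ⟨hγ0, hγ1⟩ := hγ
  set dP := saDist P π p0 with hdP
  set dPm := saDist Pm π p0 with hdPm
  -- nonnegativity of distributions
  have h0P : ∀ t sa, 0 ≤ dP t sa := by
    intro t; induction t with
    | zero => intro sa; exact mul_nonneg (hp00 _) (hπ0 _ _)
    | succ t ih =>
      intro sa
      exact mul_nonneg (Finset.sum_nonneg fun sa' _ => mul_nonneg (hP0 _ _) (ih sa'))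
        (hπ0 _ _)
  have h0Pm : ∀ t sa, 0 ≤ dPm t sa := by
    intro t; induction t with
    | zero => intro sa; exact mul_nonneg (hp00 _) (hπ0 _ _)
    | succ t ih =>
      intro sa
      exact mul_nonneg (Finset.sum_nonneg fun sa' _ => mul_nonneg (hPm0 _ _) (ih sa'))
        (hπ0 _ _)
  -- distributions sum to 1
  have hsumP : ∀ t, ∑ sa, dP t sa = 1 := by
    intro t; induction t with
    | zero =>
      rw [hdP, Fintype.sum_prod_type]
      simp only [saDist, ← Finset.mul_sum, hπ1, mul_one, hp01]
    | succ t ih =>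
      rw [hdP, Fintype.sum_prod_type]
      simp only [saDist, ← hdP]
      simp only [← Finset.mul_sum, hπ1, mul_one]
      rw [Finset.sum_comm]
      simp only [← Finset.sum_mul, hP1, one_mul, ih]
  have hsumPm : ∀ t, ∑ sa, dPm t sa = 1 := by
    intro t; induction t with
    | zero =>
      rw [hdPm, Fintype.sum_prod_type]
      simp only [saDist, ← Finset.mul_sum, hπ1, mul_one, hp01]
    | succ t ih =>
      rw [hdPm, Fintype.sum_prod_type]
      simp only [saDist, ← hdPm]
      simp only [← Finset.mul_sum, hπ1, mul_one]
      rw [Finset.sum_comm]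
      simp only [← Finset.sum_mul, hPm1, one_mul, ih]
  -- nonemptiness and rmax ≥ 0
  have hS : Nonempty S := by
    rcases isEmpty_or_nonempty S with h | h
    · rw [Finset.univ_eq_empty, Finset.sum_empty] at hp01; norm_num at hp01
    · exact h
  obtain ⟨s0⟩ := hS
  have hA : Nonempty A := by
    rcases isEmpty_or_nonempty A with h | h
    · have := hπ1 s0
      rw [Finset.univ_eq_empty, Finset.sum_empty] at this; norm_num at this
    · exact h
  obtain ⟨a0⟩ := hA
  have hr0 : 0 ≤ rmax := le_trans (abs_nonneg _) (hr (s0, a0))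
  -- the L1 distance between the two rollouts
  set F : ℕ → ℝ := fun t => ∑ sa, |dP t sa - dPm t sa| with hF
  -- one-step recursion for F
  have hstep : ∀ t, F (t + 1) ≤ F t + 2 * δ (t + 1) := by
    intro t
    have hm := hmodel (t + 1) (Nat.succ_le_succ (Nat.zero_le t))
    simp only [Nat.add_sub_cancel] at hm
    have key : F (t + 1) ≤ F t + 2 * ∑ sa, dPm t sa * tv (P sa) (Pm sa) := by
      have hpt : ∀ sa : S × A,
          |dP (t + 1) sa - dPm (t + 1) sa| ≤
            π sa.1 sa.2 * ∑ sa', (P sa' sa.1 * |dP t sa' - dPm t sa'|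
              + |P sa' sa.1 - Pm sa' sa.1| * dPm t sa') := by
        intro sa
        have e1 : dP (t + 1) sa - dPm (t + 1) sa
            = (∑ sa', (P sa' sa.1 * dP t sa' - Pm sa' sa.1 * dPm t sa')) * π sa.1 sa.2 := by
          rw [hdP, hdPm]
          simp only [saDist, ← hdP, ← hdPm]
          rw [Finset.sum_sub_distrib]
          ring
        rw [e1, abs_mul, abs_of_nonneg (hπ0 _ _), mul_comm]
        refine mul_le_mul_of_nonneg_left ?_ (hπ0 _ _)
        refine le_trans (Finset.abs_sum_le_sum_abs _ _) (Finset.sum_le_sum ?_)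
        intro sa' _
        have e2 : P sa' sa.1 * dP t sa' - Pm sa' sa.1 * dPm t sa'
            = P sa' sa.1 * (dP t sa' - dPm t sa') + (P sa' sa.1 - Pm sa' sa.1) * dPm t sa' := by
          ring
        rw [e2]
        refine le_trans (abs_add_le _ _) ?_
        rw [abs_mul, abs_mul, abs_of_nonneg (hP0 _ _), abs_of_nonneg (h0Pm _ _)]
      have inner : ∀ sa' : S × A,
          (∑ s : S, (P sa' s * |dP t sa' - dPm t sa'|
              + |P sa' s - Pm sa' s| * dPm t sa'))
            = |dP t sa' - dPm t sa'| + dPm t sa' * (2 * tv (P sa') (Pm sa')) := by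
        intro sa'
        rw [Finset.sum_add_distrib, ← Finset.sum_mul, ← Finset.sum_mul, hP1, one_mul, tv]
        ring
      calc F (t + 1) ≤ ∑ sa : S × A, π sa.1 sa.2 * ∑ sa',
              (P sa' sa.1 * |dP t sa' - dPm t sa'| + |P sa' sa.1 - Pm sa' sa.1| * dPm t sa') :=
            Finset.sum_le_sum fun sa _ => hpt sa
        _ = ∑ s : S, ∑ sa' : S × A,
              (P sa' s * |dP t sa' - dPm t sa'| + |P sa' s - Pm sa' s| * dPm t sa') := by
            rw [Fintype.sum_prod_type]
            refine Finset.sum_congr rfl fun s _ => ?_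
            have e3 : (∑ y : A, π s y * ∑ sa' : S × A,
                (P sa' s * |dP t sa' - dPm t sa'| + |P sa' s - Pm sa' s| * dPm t sa'))
                = ∑ sa' : S × A,
                  (P sa' s * |dP t sa' - dPm t sa'| + |P sa' s - Pm sa' s| * dPm t sa') := by
              rw [← Finset.sum_mul, hπ1, one_mul]
            exact e3
        _ = ∑ sa' : S × A, ∑ s : S,
              (P sa' s * |dP t sa' - dPm t sa'| + |P sa' s - Pm sa' s| * dPm t sa') :=
            Finset.sum_comm
        _ = ∑ sa' : S × A,
              (|dP t sa' - dPm t sa'| + dPm t sa' * (2 * tv (P sa') (Pm sa'))) :=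
            Finset.sum_congr rfl fun sa' _ => inner sa'
        _ = F t + 2 * ∑ sa, dPm t sa * tv (P sa) (Pm sa) := by
            rw [Finset.sum_add_distrib, hF, Finset.mul_sum]
            congr 1
            exact Finset.sum_congr rfl fun sa' _ => by ring
    linarith
  -- cumulative bound on F
  have hFle : ∀ t, F t ≤ 2 * ∑ k ∈ Finset.range (t + 1), δ k := by
    intro t; induction t with
    | zero =>
      have h0 : F 0 = 0 := by
        simp only [hF, hdP, hdPm, saDist, sub_self, abs_zero, Finset.sum_const_zero]
      simp [h0, Finset.sum_range_one, hδ0]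
    | succ t ih =>
      calc F (t + 1) ≤ F t + 2 * δ (t + 1) := hstep t
        _ ≤ 2 * ∑ k ∈ Finset.range (t + 1), δ k + 2 * δ (t + 1) := by linarith
        _ = 2 * ∑ k ∈ Finset.range (t + 2), δ k := by rw [Finset.sum_range_succ δ (t + 1)]; ring
  -- reward expectation bound per step
  have hR : ∀ t, (∑ sa, r sa * dPm t sa) - (∑ sa, r sa * dP t sa)
      ≤ 2 * rmax * ∑ k ∈ Finset.range (t + 1), δ k := by
    intro t
    have h1 : (∑ sa, r sa * dPm t sa) - (∑ sa, r sa * dP t sa)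
        = ∑ sa, r sa * (dPm t sa - dP t sa) := by
      rw [← Finset.sum_sub_distrib]; exact Finset.sum_congr rfl fun _ _ => by ring
    rw [h1]
    calc ∑ sa, r sa * (dPm t sa - dP t sa) ≤ ∑ sa, rmax * |dP t sa - dPm t sa| := by
          refine Finset.sum_le_sum fun sa _ => ?_
          calc r sa * (dPm t sa - dP t sa) ≤ |r sa * (dPm t sa - dP t sa)| := le_abs_self _
            _ = |r sa| * |dP t sa - dPm t sa| := by rw [abs_mul, abs_sub_comm]
            _ ≤ rmax * |dP t sa - dPm t sa| :=
                mul_le_mul_of_nonneg_right (hr sa) (abs_nonneg _)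
      _ = rmax * F t := by rw [hF, Finset.mul_sum]
      _ ≤ rmax * (2 * ∑ k ∈ Finset.range (t + 1), δ k) :=
          mul_le_mul_of_nonneg_left (hFle t) hr0
      _ = 2 * rmax * ∑ k ∈ Finset.range (t + 1), δ k := by ring
  -- expectation magnitudes
  have hEbd : ∀ (d : ℕ → S × A → ℝ), (∀ t sa, 0 ≤ d t sa) → (∀ t, ∑ sa, d t sa = 1) →
      ∀ t, |∑ sa, r sa * d t sa| ≤ rmax := by
    intro d h0 h1 t
    calc |∑ sa, r sa * d t sa| ≤ ∑ sa, |r sa * d t sa| := Finset.abs_sum_le_sum_abs _ _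
      _ ≤ ∑ sa, rmax * d t sa := by
          refine Finset.sum_le_sum fun sa _ => ?_
          rw [abs_mul, abs_of_nonneg (h0 t sa)]
          exact mul_le_mul_of_nonneg_right (hr sa) (h0 t sa)
      _ = rmax := by rw [← Finset.mul_sum, h1, mul_one]
  have hgeo : Summable fun t : ℕ => γ ^ t := summable_geometric_of_lt_one hγ0.le hγ1
  have hfP : Summable fun t : ℕ => γ ^ t * ∑ sa, r sa * dP t sa := by
    refine Summable.of_norm_bounded (hgeo.mul_left rmax) fun t => ?_
    rw [Real.norm_eq_abs, abs_mul, abs_pow, abs_of_pos hγ0]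
    calc γ ^ t * |∑ sa, r sa * dP t sa| ≤ γ ^ t * rmax :=
          mul_le_mul_of_nonneg_left (hEbd dP h0P hsumP t) (pow_nonneg hγ0.le t)
      _ = rmax * γ ^ t := mul_comm _ _
  have hfPm : Summable fun t : ℕ => γ ^ t * ∑ sa, r sa * dPm t sa := by
    refine Summable.of_norm_bounded (hgeo.mul_left rmax) fun t => ?_
    rw [Real.norm_eq_abs, abs_mul, abs_pow, abs_of_pos hγ0]
    calc γ ^ t * |∑ sa, r sa * dPm t sa| ≤ γ ^ t * rmax :=
          mul_le_mul_of_nonneg_left (hEbd dPm h0Pm hsumPm t) (pow_nonneg hγ0.le t)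
      _ = rmax * γ ^ t := mul_comm _ _
  -- Cauchy product analysis of γ^t * (∑_{k ≤ t} δ k)
  have hnf : Summable fun k : ℕ => ‖γ ^ k * δ k‖ := by
    have e : (fun k : ℕ => ‖γ ^ k * δ k‖) = fun k => γ ^ k * δ k := by
      funext k
      rw [Real.norm_eq_abs, abs_of_nonneg (mul_nonneg (pow_nonneg hγ0.le k) (hδ k))]
    rw [e]; exact hsum
  have hng : Summable fun j : ℕ => ‖γ ^ j‖ := by
    have e : (fun j : ℕ => ‖γ ^ j‖) = fun j => γ ^ j := by
      funext j; rw [Real.norm_eq_abs, abs_of_nonneg (pow_nonneg hγ0.le j)]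
    rw [e]; exact hgeo
  have hconv : ∀ n : ℕ, ∑ k ∈ Finset.range (n + 1), (γ ^ k * δ k) * γ ^ (n - k)
      = γ ^ n * ∑ k ∈ Finset.range (n + 1), δ k := by
    intro n
    rw [Finset.mul_sum]
    refine Finset.sum_congr rfl fun k hk => ?_
    have hkn : k ≤ n := Nat.lt_succ_iff.mp (Finset.mem_range.mp hk)
    have e : γ ^ k * δ k * γ ^ (n - k) = γ ^ (k + (n - k)) * δ k := by rw [pow_add]; ring
    rw [e, Nat.add_sub_cancel' hkn]
  have hgS : Summable fun n : ℕ => γ ^ n * ∑ k ∈ Finset.range (n + 1), δ k := by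
    have h1 := (summable_norm_sum_mul_range_of_summable_norm hnf hng).of_norm
    have e : (fun n : ℕ => ∑ k ∈ Finset.range (n + 1), (γ ^ k * δ k) * γ ^ (n - k))
        = fun n => γ ^ n * ∑ k ∈ Finset.range (n + 1), δ k := funext hconv
    rwa [e] at h1
  have htS : ∑' n : ℕ, γ ^ n * ∑ k ∈ Finset.range (n + 1), δ k
      = (∑' k : ℕ, γ ^ k * δ k) * (1 - γ)⁻¹ := by
    calc ∑' n : ℕ, γ ^ n * ∑ k ∈ Finset.range (n + 1), δ k
        = ∑' n : ℕ, ∑ k ∈ Finset.range (n + 1), (γ ^ k * δ k) * γ ^ (n - k) :=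
          tsum_congr fun n => (hconv n).symm
      _ = (∑' k : ℕ, γ ^ k * δ k) * (∑' j : ℕ, γ ^ j) :=
          (tsum_mul_tsum_eq_tsum_sum_range_of_summable_norm hnf hng).symm
      _ = (∑' k : ℕ, γ ^ k * δ k) * (1 - γ)⁻¹ := by
          rw [tsum_geometric_of_lt_one hγ0.le hγ1]
  -- main bound
  have hmain : (∑' t : ℕ, γ ^ t * ∑ sa, r sa * dPm t sa)
      - (∑' t : ℕ, γ ^ t * ∑ sa, r sa * dP t sa)
      ≤ 2 * rmax * ((∑' k : ℕ, γ ^ k * δ k) * (1 - γ)⁻¹) := by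
    rw [← Summable.tsum_sub hfPm hfP]
    calc ∑' t : ℕ, (γ ^ t * ∑ sa, r sa * dPm t sa - γ ^ t * ∑ sa, r sa * dP t sa)
        ≤ ∑' t : ℕ, 2 * rmax * (γ ^ t * ∑ k ∈ Finset.range (t + 1), δ k) := by
          refine Summable.tsum_le_tsum (fun t => ?_) (hfPm.sub hfP) (hgS.mul_left _)
          have h2 : γ ^ t * (∑ sa, r sa * dPm t sa) - γ ^ t * (∑ sa, r sa * dP t sa)
              = γ ^ t * ((∑ sa, r sa * dPm t sa) - (∑ sa, r sa * dP t sa)) := by ring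
          rw [h2]
          calc γ ^ t * ((∑ sa, r sa * dPm t sa) - (∑ sa, r sa * dP t sa))
              ≤ γ ^ t * (2 * rmax * ∑ k ∈ Finset.range (t + 1), δ k) :=
                mul_le_mul_of_nonneg_left (hR t) (pow_nonneg hγ0.le t)
            _ = 2 * rmax * (γ ^ t * ∑ k ∈ Finset.range (t + 1), δ k) := by ring
      _ = 2 * rmax * ∑' t : ℕ, γ ^ t * ∑ k ∈ Finset.range (t + 1), δ k := tsum_mul_left
      _ = 2 * rmax * ((∑' k : ℕ, γ ^ k * δ k) * (1 - γ)⁻¹) := by rw [htS]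
  have hfin : (2 * rmax / (1 - γ)) * ∑' t : ℕ, γ ^ t * δ t
      = 2 * rmax * ((∑' k : ℕ, γ ^ k * δ k) * (1 - γ)⁻¹) := by
    rw [div_eq_mul_inv]; ring
  linarith [hmain, hfin]
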